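/- Fix λ > 0 and an integer L ≥ 1, and write q_0 = e^{−λ}, q_1 = λe^{−λ}. Under independent Poisson(λ) arrivals per level, the probability that the channel is idle — i.e., the probability of the event { there exists j ∈ {1,…,L} with k_j = 0 and k_{j'} ≤ 1 for all j' < j } — equals (q_0 + q_1)^L − q_1^L + (1 − q_0 − q_1) · Σ_{i=2}^L [ (q_0 + q_1)^{i−1} − q_1^{i−1} ] (Theorem 4, equation (8)). -/

import Mathlib

/-- Poisson probability weight of an arrival configuration `k : Fin L → ℕ`
(independent Poisson(λ) arrivals per power level). -/
noncomputable def poissonWeight (L : ℕ) (lam : ℝ) (k : Fin L → ℕ) : ℝ :=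
  ∏ m, lam ^ (k m) * Real.exp (-lam) / (Nat.factorial (k m))

namespace Stmt6Aux

/-- Poisson pmf factor. -/
noncomputable def pois (lam : ℝ) (n : ℕ) : ℝ := lam ^ n * Real.exp (-lam) / (Nat.factorial n)

lemma pois_nonneg {lam : ℝ} (hlam : 0 ≤ lam) (n : ℕ) : 0 ≤ pois lam n := by
  unfold pois; positivity

lemma pois_zero (lam : ℝ) : pois lam 0 = Real.exp (-lam) := by simp [pois]

lemma pois_one (lam : ℝ) : pois lam 1 = lam * Real.exp (-lam) := by simp [pois]

lemma pois_hasSum (lam : ℝ) : HasSum (pois lam) 1 := by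
  unfold pois
  apply (hasSum_mul_left_iff (Real.exp_ne_zero lam)).mp
  have h : (fun n ↦ Real.exp lam * (lam ^ n * Real.exp (-lam) / (Nat.factorial n))) =
      fun n ↦ lam ^ n / (Nat.factorial n) := by
    ext n
    rw [Real.exp_neg]
    have := Real.exp_ne_zero lam
    field_simp
  rw [h, mul_one, Real.exp_eq_exp_ℝ]
  exact NormedSpace.expSeries_div_hasSum_exp lam

lemma weight_cons (L : ℕ) (lam : ℝ) (n : ℕ) (k : Fin L → ℕ) :
    poissonWeight (L + 1) lam (Fin.cons n k) = pois lam n * poissonWeight L lam k := by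
  unfold poissonWeight pois
  rw [Fin.prod_univ_succ]
  simp

/-- The "idle" event. -/
def Ev (L : ℕ) : Set (Fin L → ℕ) :=
  {k | ∃ j : Fin L, k j = 0 ∧ ∀ j', j' < j → k j' ≤ 1}

lemma ev_cons {L : ℕ} (n : ℕ) (k : Fin L → ℕ) :
    Fin.cons n k ∈ Ev (L + 1) ↔ n = 0 ∨ (n = 1 ∧ k ∈ Ev L) := by
  constructor
  · rintro ⟨j, hj0, hj1⟩
    induction j using Fin.cases with
    | zero => left; simpa using hj0
    | succ i =>
      have hn : n ≤ 1 := by simpa using hj1 0 (Fin.succ_pos i)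
      match n, hn with
      | 0, _ => exact Or.inl rfl
      | 1, _ =>
        refine Or.inr ⟨rfl, i, by simpa using hj0, fun j' hj' => ?_⟩
        simpa using hj1 j'.succ (by simpa [Fin.succ_lt_succ_iff] using hj')
  · rintro (rfl | ⟨rfl, j, hj0, hj1⟩)
    · exact ⟨0, by simp, fun j' hj' => absurd hj' (Fin.not_lt_zero j')⟩
    · refine ⟨j.succ, by simpa using hj0, fun j' hj' => ?_⟩
      induction j' using Fin.cases with
      | zero => simp
      | succ m =>
        have : m < j := by simpa [Fin.succ_lt_succ_iff] using hj'
        simpa using hj1 m this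

set_option maxHeartbeats 1600000 in
lemma total_hasSum {lam : ℝ} (hlam : 0 ≤ lam) : ∀ L, HasSum (poissonWeight L lam) 1 := by
  intro L
  induction L with
  | zero =>
    have h0 : poissonWeight 0 lam default = 1 := by simp [poissonWeight]
    have := hasSum_single (f := poissonWeight 0 lam) default
        (fun b' hb' => absurd (Subsingleton.elim b' default) hb')
    rwa [h0] at this
  | succ L IH =>
    have hF : ∀ p : ℕ × (Fin L → ℕ),
        poissonWeight (L + 1) lam (Fin.cons p.1 p.2) = pois lam p.1 * poissonWeight L lam p.2 :=
      fun p => weight_cons L lam p.1 p.2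
    set F : ℕ × (Fin L → ℕ) → ℝ := fun p => pois lam p.1 * poissonWeight L lam p.2 with hFdef
    have hw_nonneg : ∀ k, 0 ≤ poissonWeight L lam k := by
      intro k; unfold poissonWeight
      apply Finset.prod_nonneg
      intro m _; positivity
    have hFnn : 0 ≤ F := by
      intro p
      exact mul_nonneg (pois_nonneg hlam _) (hw_nonneg _)
    have hsum : Summable F := by
      rw [summable_prod_of_nonneg hFnn]
      constructor
      · intro n
        simpa only [hFdef] using IH.summable.mul_left (pois lam n)
      · have : (fun n => ∑' k, F (n, k)) = fun n => pois lam n * 1 := by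
          ext n
          simp only [hFdef]
          rw [tsum_mul_left, IH.tsum_eq]
        rw [this]
        simpa using (pois_hasSum lam).summable
    have hfib : ∀ n, HasSum (fun k => F (n, k)) (pois lam n * 1) := fun n => IH.mul_left _
    have h1 : HasSum (fun n => pois lam n * 1) (∑' p, F p) :=
      hsum.hasSum.prod_fiberwise hfib
    have h2 : HasSum (fun n => pois lam n * 1) 1 := by simpa using pois_hasSum lam
    have hval : (∑' p, F p) = 1 := h1.unique h2
    have hFsum : HasSum F 1 := hval ▸ hsum.hasSum
    have := (Fin.consEquiv (fun _ : Fin (L + 1) => ℕ)).hasSum_iff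
      (f := poissonWeight (L + 1) lam) (a := 1)
    apply this.mp
    convert hFsum using 1
    ext p
    exact hF p

lemma ev_hasSum {lam : ℝ} (hlam : 0 ≤ lam) : ∀ L,
    HasSum ((Ev L).indicator (poissonWeight L lam))
      (∑ j ∈ Finset.range L, Real.exp (-lam) * (lam * Real.exp (-lam)) ^ j) := by
  intro L
  induction L with
  | zero =>
    have : (Ev 0).indicator (poissonWeight 0 lam) = 0 := by
      funext k
      have hk : k ∉ Ev 0 := by rintro ⟨j, -⟩; exact j.elim0
      simp [Set.indicator_of_notMem hk]
    rw [this]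
    exact hasSum_zero
  | succ L IH =>
    set q0 := Real.exp (-lam) with hq0
    set q1 := lam * Real.exp (-lam) with hq1
    set SL := ∑ j ∈ Finset.range L, q0 * q1 ^ j with hSL
    set F0 : ℕ × (Fin L → ℕ) → ℝ :=
      fun p => if p.1 = 0 then q0 * poissonWeight L lam p.2 else 0 with hF0
    set F1 : ℕ × (Fin L → ℕ) → ℝ :=
      fun p => if p.1 = 1 then q1 * (Ev L).indicator (poissonWeight L lam) p.2 else 0 with hF1
    have h0 : HasSum F0 (q0 * 1) := by
      have hinj : Function.Injective (fun k : Fin L → ℕ => ((0, k) : ℕ × (Fin L → ℕ))) := by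
        intro a b hab; simpa using hab
      refine (hinj.hasSum_iff ?_).mp ?_
      · intro p hp
        have : p.1 ≠ 0 := by
          intro h
          exact hp ⟨p.2, by simp [← h]⟩
        simp [hF0, this]
      · simpa [hF0, Function.comp_def] using (total_hasSum hlam L).mul_left q0
    have h1 : HasSum F1 (q1 * SL) := by
      have hinj : Function.Injective (fun k : Fin L → ℕ => ((1, k) : ℕ × (Fin L → ℕ))) := by
        intro a b hab; simpa using hab
      refine (hinj.hasSum_iff ?_).mp ?_
      · intro p hp
        have : p.1 ≠ 1 := by
          intro h
          exact hp ⟨p.2, by simp [← h]⟩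
        simp [hF1, this]
      · simpa [hF1, Function.comp_def] using IH.mul_left q1
    have hadd : HasSum (F0 + F1) (q0 * 1 + q1 * SL) := h0.add h1
    have hdecomp : ((Ev (L + 1)).indicator (poissonWeight (L + 1) lam)) ∘
        (Fin.consEquiv (fun _ : Fin (L + 1) => ℕ)) = F0 + F1 := by
      funext p
      obtain ⟨n, k⟩ := p
      have he : (Fin.consEquiv (fun _ : Fin (L + 1) => ℕ)) (n, k) = Fin.cons n k := rfl
      simp only [Function.comp_apply, he, Pi.add_apply]
      by_cases hmem : Fin.cons n k ∈ Ev (L + 1)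
      · rw [Set.indicator_of_mem hmem]
        rcases (ev_cons n k).mp hmem with h | ⟨h, hk⟩
        · subst h
          simp [hF0, hF1, weight_cons, pois_zero, ← hq0]
        · subst h
          simp [hF0, hF1, weight_cons, pois_one, ← hq1, Set.indicator_of_mem hk]
      · rw [Set.indicator_of_notMem hmem]
        have hne : ¬(n = 0 ∨ (n = 1 ∧ k ∈ Ev L)) := fun h => hmem ((ev_cons n k).mpr h)
        push_neg at hne
        obtain ⟨hn0, hn1⟩ := hne
        by_cases hn : n = 1
        · simp [hF0, hF1, hn0, hn, Set.indicator_of_notMem (hn1 hn)]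
        · simp [hF0, hF1, hn0, hn]
    have hmain : HasSum ((Ev (L + 1)).indicator (poissonWeight (L + 1) lam))
        (q0 * 1 + q1 * SL) := by
      apply ((Fin.consEquiv (fun _ : Fin (L + 1) => ℕ)).hasSum_iff).mp
      rw [hdecomp]
      exact hadd
    have hgeom : ∑ j ∈ Finset.range (L + 1), q0 * q1 ^ j = q0 * 1 + q1 * SL := by
      rw [Finset.sum_range_succ' (fun j => q0 * q1 ^ j) L]
      rw [hSL, Finset.mul_sum, add_comm (q0 * 1)]
      rw [Finset.sum_congr rfl (fun j hj => by rw [pow_succ]; ring :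
        ∀ j ∈ Finset.range L, q0 * q1 ^ (j + 1) = q1 * (q0 * q1 ^ j))]
      simp
    exact hgeom ▸ hmain

lemma algebra_id (a b : ℝ) (L : ℕ) (hL : 1 ≤ L) :
    ∑ j ∈ Finset.range L, a * b ^ j
      = (a + b) ^ L - b ^ L
        + (1 - a - b) * ∑ i ∈ Finset.Icc 2 L, ((a + b) ^ (i - 1) - b ^ (i - 1)) := by
  induction L, hL using Nat.le_induction with
  | base =>
    rw [show Finset.Icc 2 1 = ∅ from Finset.Icc_eq_empty (by omega)]
    simp
  | succ L hL IH =>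
    rw [Finset.sum_range_succ, IH, Finset.sum_Icc_succ_top (by omega)]
    simp only [Nat.add_sub_cancel]
    rw [pow_succ (a + b) L, pow_succ b L]
    ring

end Stmt6Aux

/-- Theorem 4 (equation (8)): the probability that the channel is idle, i.e. that some
power level `j` is empty while all higher-power levels `j' < j` contain at most one
packet (so the empty level is observed before any power collision), equals
`(q₀+q₁)^L − q₁^L + (1 − q₀ − q₁)·Σ_{i=2}^L [(q₀+q₁)^{i−1} − q₁^{i−1}]`,
where `q₀ = e^{−λ}` and `q₁ = λe^{−λ}`. -/
theorem stmt6 (lam : ℝ) (hlam : 0 < lam) (L : ℕ) (hL : 1 ≤ L) :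
    ∑' k : {k : Fin L → ℕ // ∃ j : Fin L, k j = 0 ∧ ∀ j', j' < j → k j' ≤ 1},
        poissonWeight L lam k.1
    = (Real.exp (-lam) + lam * Real.exp (-lam)) ^ L
        - (lam * Real.exp (-lam)) ^ L
        + (1 - Real.exp (-lam) - lam * Real.exp (-lam)) *
          ∑ i ∈ Finset.Icc 2 L,
            ((Real.exp (-lam) + lam * Real.exp (-lam)) ^ (i - 1)
              - (lam * Real.exp (-lam)) ^ (i - 1)) := by
  have h := Stmt6Aux.ev_hasSum (lam := lam) hlam.le L
  have hts : ∑' k : (Stmt6Aux.Ev L), poissonWeight L lam k.1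
      = ∑ j ∈ Finset.range L, Real.exp (-lam) * (lam * Real.exp (-lam)) ^ j := by
    rw [tsum_subtype]
    exact h.tsum_eq
  have heq : (∑' k : {k : Fin L → ℕ // ∃ j : Fin L, k j = 0 ∧ ∀ j', j' < j → k j' ≤ 1},
      poissonWeight L lam k.1) = ∑' k : (Stmt6Aux.Ev L), poissonWeight L lam k.1 := rfl
  rw [heq, hts]
  have := Stmt6Aux.algebra_id (Real.exp (-lam)) (lam * Real.exp (-lam)) L hL
  rw [this]
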